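/- Every Split Cycle CCR is AS rationalizable over (ℤ,+,≤) with Advantage(x,y,R|_{x,y}) = Margin(x,y) and Standard(x,y,R^{-x,y}) = the maximum splitting number over majority paths from y to x in R^{-x,y} (taken to be 0 if there are no such paths). -/

import Mathlib

/-- A profile assigns to each voter a transitive and complete preference relation. -/
structure Profile (V X : Type*) where
  rel : V → X → X → Prop
  total : ∀ i x y, rel i x y ∨ rel i y x
  trans : ∀ i x y z, rel i x y → rel i y z → rel i x z

/-- A collective choice rule maps profiles to binary relations on candidates. -/
abbrev CCR (V X : Type*) := Profile V X → X → X → Prop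

/-- Strict part of a relation. -/
def strictPref {X : Type*} (R : X → X → Prop) (x y : X) : Prop := R x y ∧ ¬ R y x

/-- The restriction of a profile to the pair {x,y}. -/
def Profile.restrict {V X : Type*} (R : Profile V X) (x y : X) : V → X → X → Prop :=
  fun i a b => (a = x ∨ a = y) ∧ (b = x ∨ b = y) ∧ R.rel i a b

/-- The preprofile obtained by removing the pairs ⟨x,y⟩ and ⟨y,x⟩ from every voter's relation. -/
def Profile.remove {V X : Type*} (R : Profile V X) (x y : X) : V → X → X → Prop :=
  fun i a b => R.rel i a b ∧ ¬ ((a = x ∧ b = y) ∨ (a = y ∧ b = x))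

/-- Majority margin of x over y in a preprofile. -/
noncomputable def marginOf {V X : Type*} (p : V → X → X → Prop) (x y : X) : ℤ :=
  (Nat.card {i : V // strictPref (p i) x y} : ℤ) -
    (Nat.card {i : V // strictPref (p i) y x} : ℤ)

/-- A majority cycle (represented by its list of distinct vertices, with edges wrapping
around) for a margin function M. -/
def IsMajCycle {X : Type*} (M : X → X → ℤ) (l : List X) : Prop :=
  2 ≤ l.length ∧ l.Nodup ∧ ∀ p ∈ l.zip (l.rotate 1), 0 < M p.1 p.2

/-- The splitting number of a majority cycle: the smallest margin along the cycle. -/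
noncomputable def cycleSplit {X : Type*} (M : X → X → ℤ) (l : List X) : ℤ :=
  (((l.zip (l.rotate 1)).map (fun p => M p.1 p.2)).min?).getD 0

/-- A Split Cycle CCR: x strictly socially preferred to y iff the margin of x over y is
positive and exceeds the splitting number of every majority cycle containing x and y. -/
def IsSplitCycleCCR {V X : Type*} (f : CCR V X) : Prop :=
  ∀ (R : Profile V X) (x y : X),
    strictPref (f R) x y ↔
      (marginOf R.rel y x < marginOf R.rel x y ∧
        ∀ l : List X, IsMajCycle (marginOf R.rel) l → x ∈ l → y ∈ l →
          cycleSplit (marginOf R.rel) l < marginOf R.rel x y)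

/-- A majority path from y to x for a margin function M. -/
def IsMajPath {X : Type*} (M : X → X → ℤ) (y x : X) (l : List X) : Prop :=
  2 ≤ l.length ∧ l.head? = some y ∧ l.getLast? = some x ∧
  l.dropLast.Nodup ∧ l.tail.Nodup ∧ l.Chain' (fun a b => 0 < M a b)

/-- The splitting number of a majority path: the smallest margin along the path. -/
noncomputable def pathSplit {X : Type*} (M : X → X → ℤ) (l : List X) : ℤ :=
  (((l.zip l.tail).map (fun p => M p.1 p.2)).min?).getD 0

section margins
variable {V X : Type*}

lemma marginOf_neg (p : V → X → X → Prop) (x y : X) :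
    marginOf p x y = - marginOf p y x := by
  unfold marginOf; ring

lemma marginOf_self (p : V → X → X → Prop) (a : X) : marginOf p a a = 0 := by
  simp [marginOf]

lemma marginOf_restrict (R : Profile V X) (x y : X) :
    marginOf (R.restrict x y) x y = marginOf R.rel x y := by
  unfold marginOf
  congr 2 <;>
    exact Nat.card_congr (Equiv.subtypeEquivRight fun i => by
      simp [strictPref, Profile.restrict])

lemma marginOf_remove_eq (R : Profile V X) {x y a b : X}
    (h : ¬((a = x ∧ b = y) ∨ (a = y ∧ b = x))) :
    marginOf (R.remove x y) a b = marginOf R.rel a b := by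
  have h' : ¬((b = x ∧ a = y) ∨ (b = y ∧ a = x)) := by tauto
  unfold marginOf
  congr 2
  · exact Nat.card_congr (Equiv.subtypeEquivRight fun i => by
      simp only [strictPref, Profile.remove]; tauto)
  · exact Nat.card_congr (Equiv.subtypeEquivRight fun i => by
      simp only [strictPref, Profile.remove]; tauto)

lemma marginOf_remove_xy (R : Profile V X) (x y : X) :
    marginOf (R.remove x y) x y = 0 := by
  have h1 : IsEmpty {i : V // strictPref (R.remove x y i) x y} :=
    ⟨fun ⟨i, h⟩ => h.1.2 (Or.inl ⟨rfl, rfl⟩)⟩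
  have h2 : IsEmpty {i : V // strictPref (R.remove x y i) y x} :=
    ⟨fun ⟨i, h⟩ => h.1.2 (Or.inr ⟨rfl, rfl⟩)⟩
  unfold marginOf
  rw [Nat.card_of_isEmpty, Nat.card_of_isEmpty]
  simp

end margins

section helpers
variable {α β : Type*}

lemma min_getD_spec {l : List ℤ} (h : l ≠ []) :
    (l.min?.getD 0) ∈ l ∧ ∀ b ∈ l, (l.min?.getD 0) ≤ b := by
  obtain ⟨a, ha⟩ : ∃ a, l.min? = some a := by
    cases hm : l.min? with
    | none => exact absurd (List.min?_eq_none_iff.mp hm) h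
    | some a => exact ⟨a, rfl⟩
  rw [ha]
  exact ⟨List.min?_mem ha,
    fun b hb => (List.le_min?_iff ha).mp le_rfl b hb⟩

lemma mem_zip_iff_getElem {l : List α} {l' : List β} {p : α × β} :
    p ∈ l.zip l' ↔ ∃ i, ∃ h1 : i < l.length, ∃ h2 : i < l'.length, p = (l[i], l'[i]) := by
  constructor
  · intro hp
    obtain ⟨i, hi, he⟩ := List.mem_iff_getElem.mp hp
    have hi' := hi
    rw [List.length_zip] at hi'
    refine ⟨i, by omega, by omega, ?_⟩
    rw [← he, List.getElem_zip]
  · rintro ⟨i, h1, h2, rfl⟩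
    have hlen : i < (l.zip l').length := by rw [List.length_zip]; omega
    exact List.mem_iff_getElem.mpr ⟨i, hlen, by rw [List.getElem_zip]⟩

lemma mem_pathEdges {l : List α} {p : α × α} :
    p ∈ l.zip l.tail ↔ ∃ i, ∃ h : i + 1 < l.length, p = (l[i], l[i+1]) := by
  rw [mem_zip_iff_getElem]
  constructor
  · rintro ⟨i, h1, h2, rfl⟩
    rw [List.length_tail] at h2
    exact ⟨i, by omega, by rw [List.getElem_tail]⟩
  · rintro ⟨i, h, rfl⟩
    exact ⟨i, by omega, by rw [List.length_tail]; omega, by rw [List.getElem_tail]⟩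

lemma mem_cycleEdges {l : List α} {p : α × α} :
    p ∈ l.zip (l.rotate 1) ↔
      ∃ i, ∃ h : i < l.length, p = (l[i], l[(i+1) % l.length]'(Nat.mod_lt _ (by omega))) := by
  rw [mem_zip_iff_getElem]
  constructor
  · rintro ⟨i, h1, h2, rfl⟩
    exact ⟨i, h1, by rw [List.getElem_rotate]⟩
  · rintro ⟨i, h, rfl⟩
    exact ⟨i, h, by rw [List.length_rotate]; exact h, by rw [List.getElem_rotate]⟩

lemma chain'_getElem {r : α → α → Prop} {l : List α} (h : l.Chain' r)
    {i : ℕ} (hi : i + 1 < l.length) : r l[i] l[i+1] := by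
  have := List.isChain_iff_getElem.mp h i (by omega)
  simpa using this

lemma chain'_of_getElem {r : α → α → Prop} {l : List α}
    (h : ∀ i (hi : i + 1 < l.length), r l[i] l[i+1]) : l.Chain' r := by
  refine List.isChain_iff_getElem.mpr fun i hi => ?_
  simpa using h i (by omega)

end helpers

section paths
variable {X : Type*}

lemma path_getElem_zero {M : X → X → ℤ} {y x : X} {l : List X} (h : IsMajPath M y x l)
    (h0 : 0 < l.length := by omega) : l[0] = y := by
  have := h.2.1
  rw [List.head?_eq_getElem?, List.getElem?_eq_getElem h0] at this
  exact Option.some.inj this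

lemma path_getElem_last {M : X → X → ℤ} {y x : X} {l : List X} (h : IsMajPath M y x l)
    (hl : l.length - 1 < l.length := by omega) : l[l.length - 1] = x := by
  have := h.2.2.1
  rw [List.getLast?_eq_getElem?, List.getElem?_eq_getElem hl] at this
  exact Option.some.inj this

lemma pathEdges_ne_nil {M : X → X → ℤ} {y x : X} {l : List X} (h : IsMajPath M y x l) :
    (l.zip l.tail).map (fun p => M p.1 p.2) ≠ [] := by
  have h2 := h.1
  intro hc
  have hlen := congrArg List.length hc
  rw [List.length_map, List.length_zip, List.length_tail, List.length_nil] at hlen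
  omega

lemma pathSplit_pos {M : X → X → ℤ} {y x : X} {l : List X} (h : IsMajPath M y x l) :
    0 < pathSplit M l := by
  obtain ⟨hmem, -⟩ := min_getD_spec (pathEdges_ne_nil h)
  obtain ⟨p, hp, heq⟩ := List.mem_map.mp hmem
  obtain ⟨i, hi, rfl⟩ := mem_pathEdges.mp hp
  rw [pathSplit, ← heq]
  exact chain'_getElem h.2.2.2.2.2 hi

lemma pathSplit_le_edge {M : X → X → ℤ} {y x : X} {l : List X} (h : IsMajPath M y x l)
    {p : X × X} (hp : p ∈ l.zip l.tail) : pathSplit M l ≤ M p.1 p.2 :=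
  (min_getD_spec (pathEdges_ne_nil h)).2 _ (List.mem_map.mpr ⟨p, hp, rfl⟩)

lemma le_pathSplit {M : X → X → ℤ} {y x : X} {l : List X} (h : IsMajPath M y x l)
    {m : ℤ} (hm : ∀ p ∈ l.zip l.tail, m ≤ M p.1 p.2) : m ≤ pathSplit M l := by
  obtain ⟨hmem, -⟩ := min_getD_spec (pathEdges_ne_nil h)
  obtain ⟨p, hp, heq⟩ := List.mem_map.mp hmem
  rw [pathSplit, ← heq]
  exact hm p hp

lemma cycleEdges_ne_nil {l : List X} (h2 : 2 ≤ l.length) {M : X → X → ℤ} :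
    (l.zip (l.rotate 1)).map (fun p => M p.1 p.2) ≠ [] := by
  intro hc
  have hlen := congrArg List.length hc
  rw [List.length_map, List.length_zip, List.length_rotate, List.length_nil] at hlen
  omega

lemma cycleSplit_le_edge {M : X → X → ℤ} {l : List X} (h2 : 2 ≤ l.length)
    {p : X × X} (hp : p ∈ l.zip (l.rotate 1)) : cycleSplit M l ≤ M p.1 p.2 :=
  (min_getD_spec (cycleEdges_ne_nil h2)).2 _ (List.mem_map.mpr ⟨p, hp, rfl⟩)

lemma le_cycleSplit {M : X → X → ℤ} {l : List X} (h2 : 2 ≤ l.length)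
    {m : ℤ} (hm : ∀ p ∈ l.zip (l.rotate 1), m ≤ M p.1 p.2) : m ≤ cycleSplit M l := by
  obtain ⟨hmem, -⟩ := min_getD_spec (cycleEdges_ne_nil (M := M) h2)
  obtain ⟨p, hp, heq⟩ := List.mem_map.mp hmem
  rw [cycleSplit, ← heq]
  exact hm p hp

lemma paths_finite [Finite X] (M : X → X → ℤ) (y x : X) :
    {l : List X | IsMajPath M y x l}.Finite := by
  have := Fintype.ofFinite X
  apply (List.finite_length_le X (Fintype.card X + 1)).subset
  intro l hl
  have h2 := hl.2.2.2.1.length_le_card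
  have h3 : l.dropLast.length = l.length - 1 := List.length_dropLast
  simp only [Set.mem_setOf_eq]
  omega

end paths

section key
variable {X : Type*}

lemma gei {α : Type*} {l : List α} {i j : ℕ} (h : i = j) {hi : i < l.length} :
    l[i] = l[j]'(h ▸ hi) := by subst h; rfl

lemma path_nodup {M' : X → X → ℤ} {x y : X} {l : List X} (hl : IsMajPath M' y x l)
    (hxy : x ≠ y) : l.Nodup := by
  have hn := hl.1
  rw [List.nodup_iff_getElem?_ne_getElem?]
  intro i j hij hj
  rw [List.getElem?_eq_getElem (by omega), List.getElem?_eq_getElem hj, Ne, Option.some_inj]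
  intro heq
  by_cases hj' : j < l.length - 1
  · have hd := hl.2.2.2.1
    have : i = j := by
      refine (List.Nodup.getElem_inj_iff hd
        (hi := by rw [List.length_dropLast]; omega)
        (hj := by rw [List.length_dropLast]; omega)).mp ?_
      simpa using heq
    omega
  · have hj2 : j = l.length - 1 := by omega
    by_cases hi' : 1 ≤ i
    · obtain ⟨i', rfl⟩ : ∃ i', i = i' + 1 := ⟨i - 1, by omega⟩
      obtain ⟨j', rfl⟩ : ∃ j', j = j' + 1 := ⟨j - 1, by omega⟩
      have ht := hl.2.2.2.2.1
      have : i' = j' := by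
        refine (List.Nodup.getElem_inj_iff ht
          (hi := by rw [List.length_tail]; omega)
          (hj := by rw [List.length_tail]; omega)).mp ?_
        simpa using heq
      omega
    · obtain rfl : i = 0 := by omega
      obtain rfl : j = l.length - 1 := hj2
      rw [path_getElem_zero hl, path_getElem_last hl] at heq
      exact hxy heq.symm

lemma key_forward {M M' : X → X → ℤ} {x y : X}
    (hMn : ∀ a b, M a b = - M b a)
    (hM'eq : ∀ a b, ¬((a = x ∧ b = y) ∨ (a = y ∧ b = x)) → M' a b = M a b)
    (hM'xy : M' x y = 0) (hM'yx : M' y x = 0)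
    (hxy : x ≠ y) (hm : 0 < M x y)
    (hcyc : ∀ c, IsMajCycle M c → x ∈ c → y ∈ c → cycleSplit M c < M x y)
    {l : List X} (hl : IsMajPath M' y x l) : pathSplit M' l < M x y := by
  by_contra hcon
  push_neg at hcon
  have hn := hl.1
  have h0 : l[0]'(by omega) = y := path_getElem_zero hl
  have hlast : l[l.length - 1]'(by omega) = x := path_getElem_last hl
  have hedge : ∀ p ∈ l.zip l.tail, 0 < M' p.1 p.2 ∧ M' p.1 p.2 = M p.1 p.2 := by
    intro p hp
    obtain ⟨i, hi, rfl⟩ := mem_pathEdges.mp hp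
    have hpos : 0 < M' l[i] l[i+1] := chain'_getElem hl.2.2.2.2.2 hi
    refine ⟨hpos, hM'eq _ _ ?_⟩
    rintro (⟨e1, e2⟩ | ⟨e1, e2⟩)
    · have f1 : l[i] = x := e1
      have f2 : l[i+1] = y := e2
      rw [f1, f2, hM'xy] at hpos; omega
    · have f1 : l[i] = y := e1
      have f2 : l[i+1] = x := e2
      rw [f1, f2, hM'yx] at hpos; omega
  have hnodup : l.Nodup := path_nodup hl hxy
  have hcycedge : ∀ p ∈ l.zip (l.rotate 1), M x y ≤ M p.1 p.2 ∧ 0 < M p.1 p.2 := by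
    intro p hp
    obtain ⟨i, hi, rfl⟩ := mem_cycleEdges.mp hp
    by_cases hi' : i + 1 < l.length
    · have e : l[(i+1) % l.length]'(Nat.mod_lt _ (by omega)) = l[i+1]'hi' :=
        gei (Nat.mod_eq_of_lt hi')
      rw [e]
      have hp' : (l[i], l[i+1]) ∈ l.zip l.tail := mem_pathEdges.mpr ⟨i, hi', rfl⟩
      obtain ⟨hpos, heq⟩ := hedge _ hp'
      have hle := pathSplit_le_edge hl hp'
      constructor
      · calc M x y ≤ pathSplit M' l := hcon
          _ ≤ M' l[i] l[i+1] := hle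
          _ = M l[i] l[i+1] := heq
      · rw [← heq]; exact hpos
    · have e1 : l[(i+1) % l.length]'(Nat.mod_lt _ (by omega)) = l[0]'(by omega) :=
        gei (by rw [show i + 1 = l.length from by omega]; exact Nat.mod_self _)
      have e2 : l[i] = l[l.length - 1]'(by omega) := gei (by omega)
      rw [e1, e2, h0, hlast]
      exact ⟨le_refl _, hm⟩
  have hcyclemem : IsMajCycle M l := ⟨hn, hnodup, fun p hp => (hcycedge p hp).2⟩
  have hxmem : x ∈ l := hlast ▸ List.getElem_mem _
  have hymem : y ∈ l := h0 ▸ List.getElem_mem _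
  have h1 := hcyc l hcyclemem hxmem hymem
  have h2 : M x y ≤ cycleSplit M l := le_cycleSplit hn (fun p hp => (hcycedge p hp).1)
  omega

lemma key_backward {M M' : X → X → ℤ} {x y : X}
    (hMn : ∀ a b, M a b = - M b a)
    (hM'eq : ∀ a b, ¬((a = x ∧ b = y) ∨ (a = y ∧ b = x)) → M' a b = M a b)
    (hxy : x ≠ y) (hm : 0 < M x y)
    (hpath : ∀ l, IsMajPath M' y x l → pathSplit M' l < M x y)
    {cc : List X} (hc : IsMajCycle M cc) (hxc : x ∈ cc) (hyc : y ∈ cc) :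
    cycleSplit M cc < M x y := by
  by_contra hcon
  push_neg at hcon
  obtain ⟨n2, hnd, hpos⟩ := hc
  have hedge : ∀ p ∈ cc.zip (cc.rotate 1), M x y ≤ M p.1 p.2 :=
    fun p hp => le_trans hcon (cycleSplit_le_edge n2 hp)
  obtain ⟨k, hk, hky⟩ := List.mem_iff_getElem.mp hyc
  obtain ⟨cd, hcd⟩ : ∃ cd, cd = cc.rotate k := ⟨_, rfl⟩
  have hlen : cd.length = cc.length := by rw [hcd]; exact List.length_rotate cc k
  have hnd' : cd.Nodup := by rw [hcd]; exact List.nodup_rotate.mpr hnd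
  have hget : ∀ (i : ℕ) (h : i < cc.length),
      cd[i]'(by omega) = cc[(i+k) % cc.length]'(Nat.mod_lt _ (by omega)) := by
    intro i h
    simp only [hcd]
    exact List.getElem_rotate cc k i (by rw [List.length_rotate]; omega)
  -- every "cycle edge" of cd is bounded below by M x y
  have hedge' : ∀ (i : ℕ) (h : i < cc.length),
      M x y ≤ M (cd[i]'(by omega)) (cd[(i+1) % cc.length]'(by rw [hlen]; exact Nat.mod_lt _ (by omega))) := by
    intro i h
    have h1 : cd[i]'(by omega) = cc[(i+k) % cc.length]'(Nat.mod_lt _ (by omega)) := hget i h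
    have h2 : cd[(i+1) % cc.length]'(by rw [hlen]; exact Nat.mod_lt _ (by omega))
        = cc[((i+k) % cc.length + 1) % cc.length]'(Nat.mod_lt _ (by omega)) := by
      have hmlt : (i+1) % cc.length < cc.length := Nat.mod_lt _ (by omega)
      have := hget ((i+1) % cc.length) hmlt
      rw [this]
      exact gei (by rw [Nat.mod_add_mod, Nat.mod_add_mod]; congr 1; omega)
    rw [h1, h2]
    exact hedge _ (mem_cycleEdges.mpr ⟨(i+k) % cc.length, Nat.mod_lt _ (by omega), rfl⟩)
  have h0 : cd[0]'(by omega) = y := by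
    rw [hget 0 (by omega)]
    have e : cc[(0+k) % cc.length]'(Nat.mod_lt _ (by omega)) = cc[k] :=
      gei (by rw [Nat.zero_add]; exact Nat.mod_eq_of_lt hk)
    rw [e, hky]
  have hxc' : x ∈ cd := by rw [hcd]; exact List.mem_rotate.mpr hxc
  obtain ⟨j, hj, hjx⟩ := List.mem_iff_getElem.mp hxc'
  rw [hlen] at hj
  have hj0 : j ≠ 0 := by
    intro hj0
    subst hj0
    rw [h0] at hjx
    exact hxy hjx.symm
  -- the segment from y to x
  set s := cd.take (j+1) with hsdef
  have hslen : s.length = j + 1 := by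
    rw [hsdef, List.length_take]; omega
  have hsget : ∀ (i : ℕ) (h : i ≤ j), s[i]'(by omega) = cd[i]'(by omega) := by
    intro i h
    simp only [hsdef]
    simp
  have hsnd : s.Nodup := (List.take_sublist _ _).nodup hnd'
  -- each edge of the segment
  have hkey : ∀ (i : ℕ) (h : i + 1 ≤ j),
      M x y ≤ M' (cd[i]'(by omega)) (cd[i+1]'(by omega)) := by
    intro i h
    have hme : M x y ≤ M (cd[i]'(by omega)) (cd[i+1]'(by omega)) := by
      have := hedge' i (by omega)
      rwa [gei (Nat.mod_eq_of_lt (by omega : i + 1 < cc.length))] at this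
    rw [hM'eq]
    · exact hme
    · rintro (⟨e1, e2⟩ | ⟨e1, e2⟩)
      · -- cd[i] = x with i < j contradicts nodup
        have : i = j := by
          refine (List.Nodup.getElem_inj_iff hnd'
            (hi := by omega) (hj := by omega)).mp ?_
          rw [hjx]; exact e1
        omega
      · -- edge (y, x): M y x ≥ M x y > 0 but M y x = -M x y < 0
        have f1 : cd[i]'(by omega) = y := e1
        have f2 : cd[i+1]'(by omega) = x := e2
        rw [f1, f2, hMn y x] at hme
        omega
  have hspath : IsMajPath M' y x s := by
    refine ⟨by omega, ?_, ?_, ?_, ?_, ?_⟩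
    · rw [List.head?_eq_getElem?, List.getElem?_eq_getElem (by omega)]
      exact congrArg some (by rw [hsget 0 (by omega)]; exact h0)
    · rw [List.getLast?_eq_getElem?, List.getElem?_eq_getElem (by omega)]
      refine congrArg some ?_
      have e : s[s.length - 1]'(by omega) = s[j]'(by omega) := gei (by omega)
      rw [e, hsget j le_rfl]
      exact hjx
    · exact (List.dropLast_sublist s).nodup hsnd
    · exact (List.tail_sublist s).nodup hsnd
    · refine chain'_of_getElem ?_
      intro i hi
      rw [hslen] at hi
      have e1 := hsget i (by omega)
      have e2 := hsget (i+1) (by omega)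
      rw [e1, e2]
      have := hkey i (by omega)
      omega
  have hsplit : M x y ≤ pathSplit M' s := by
    refine le_pathSplit hspath ?_
    intro p hp
    obtain ⟨i, hi, rfl⟩ := mem_pathEdges.mp hp
    rw [hslen] at hi
    have e1 := hsget i (by omega)
    have e2 := hsget (i+1) (by omega)
    simp only [e1, e2]
    exact hkey i (by omega)
  have := hpath s hspath
  omega
end key

section std
variable {X : Type*} [Finite X]

noncomputable def stdOf (M : X → X → ℤ) (y x : X) : ℤ :=
  sSup (pathSplit M '' {l | IsMajPath M y x l})

lemma stdOf_spec (M : X → X → ℤ) (y x : X) :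
    0 ≤ stdOf M y x ∧
    (∀ l, IsMajPath M y x l → pathSplit M l ≤ stdOf M y x) ∧
    ((∃ l, IsMajPath M y x l ∧ pathSplit M l = stdOf M y x) ∨
      ((¬ ∃ l, IsMajPath M y x l) ∧ stdOf M y x = 0)) := by
  have hfin : (pathSplit M '' {l | IsMajPath M y x l}).Finite :=
    (paths_finite M y x).image _
  by_cases h : ∃ l, IsMajPath M y x l
  · obtain ⟨l, hl⟩ := h
    have hne : (pathSplit M '' {l | IsMajPath M y x l}).Nonempty := ⟨_, ⟨l, hl, rfl⟩⟩
    obtain ⟨l', hl', heq⟩ := hne.csSup_mem hfin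
    refine ⟨?_, ?_, Or.inl ⟨l', hl', heq⟩⟩
    · rw [stdOf, ← heq]
      exact (pathSplit_pos hl').le
    · intro l'' hl''
      exact le_csSup hfin.bddAbove ⟨l'', hl'', rfl⟩
  · have hempty : pathSplit M '' {l | IsMajPath M y x l} = ∅ := by
      rw [Set.image_eq_empty]
      exact Set.eq_empty_iff_forall_notMem.mpr fun l hl => h ⟨l, hl⟩
    have : stdOf M y x = 0 := by rw [stdOf, hempty, Int.csSup_empty]
    exact ⟨this.ge, fun l hl => absurd ⟨l, hl⟩ h, Or.inr ⟨h, this⟩⟩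

end std


/-- Every Split Cycle CCR is AS rationalizable over (ℤ,+,≤) with advantage the margin from
the restricted profile and standard the maximum splitting number over majority paths from
y to x in R^{-x,y} (0 if there are no such paths). -/
theorem splitcycle_as_rationalizable {V X : Type*} [Finite V] [Finite X] (f : CCR V X)
    (hf : IsSplitCycleCCR f) :
    (∀ (x y : X) (R : Profile V X),
        marginOf (R.restrict x y) x y = - marginOf (R.restrict x y) y x) ∧
    ∃ Std : X → X → (V → X → X → Prop) → ℤ,
      (∀ (x y : X) (R : Profile V X), 0 ≤ Std x y (R.remove x y)) ∧
      (∀ (x y : X) (R : Profile V X),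
        (∀ l : List X, IsMajPath (marginOf (R.remove x y)) y x l →
          pathSplit (marginOf (R.remove x y)) l ≤ Std x y (R.remove x y)) ∧
        ((∃ l : List X, IsMajPath (marginOf (R.remove x y)) y x l ∧
            pathSplit (marginOf (R.remove x y)) l = Std x y (R.remove x y)) ∨
          ((¬ ∃ l : List X, IsMajPath (marginOf (R.remove x y)) y x l) ∧
            Std x y (R.remove x y) = 0))) ∧
      (∀ (x y : X) (R : Profile V X),
        strictPref (f R) x y ↔
          Std x y (R.remove x y) < marginOf (R.restrict x y) x y) := by
  refine ⟨fun x y R => marginOf_neg _ _ _, ?_⟩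
  refine ⟨fun x y q => stdOf (marginOf q) y x, ?_, ?_, ?_⟩
  · intro x y R
    exact (stdOf_spec (marginOf (R.remove x y)) y x).1
  · intro x y R
    obtain ⟨-, h2, h3⟩ := stdOf_spec (marginOf (R.remove x y)) y x
    exact ⟨h2, h3⟩
  · intro x y R
    rw [hf R x y, marginOf_restrict]
    obtain ⟨h0, hub, hach⟩ := stdOf_spec (marginOf (R.remove x y)) y x
    rcases eq_or_ne x y with rfl | hxy
    · constructor
      · rintro ⟨h, -⟩
        exact absurd h (lt_irrefl _)
      · intro h
        rw [marginOf_self] at h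
        exact absurd h (not_lt.mpr h0)
    · have hMn := marginOf_neg R.rel
      have hM'eq : ∀ a b, ¬((a = x ∧ b = y) ∨ (a = y ∧ b = x)) →
          marginOf (R.remove x y) a b = marginOf R.rel a b :=
        fun a b h => marginOf_remove_eq R h
      have hM'xy := marginOf_remove_xy R x y
      have hM'yx : marginOf (R.remove x y) y x = 0 := by
        rw [marginOf_neg, hM'xy, neg_zero]
      constructor
      · rintro ⟨hlt, hcyc⟩
        show stdOf (marginOf (R.remove x y)) y x < marginOf R.rel x y
        have hm : 0 < marginOf R.rel x y := by have e := hMn y x; omega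
        rcases hach with ⟨l, hl, heq⟩ | ⟨-, hz⟩
        · rw [← heq]
          exact key_forward hMn hM'eq hM'xy hM'yx hxy hm hcyc hl
        · rw [hz]
          exact hm
      · intro hstd
        have hstd' : stdOf (marginOf (R.remove x y)) y x < marginOf R.rel x y := hstd
        have hm : 0 < marginOf R.rel x y := lt_of_le_of_lt h0 hstd'
        refine ⟨by have e := hMn y x; omega, ?_⟩
        intro l hcyc hxl hyl
        exact key_backward hMn hM'eq hxy hm
          (fun l' hl' => lt_of_le_of_lt (hub l' hl') hstd') hcyc hxl hyl
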